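/- (DMTS, χ, ≲) with simulation refinement is a behavioral specification theory for LTS adequate for simulation equivalence: with I ⊨ D iff χ(I) ≲ D, every χ(I) is a characteristic formula, and Th(I₁) = Th(I₂) iff I₁ and I₂ are simulation equivalent. -/

import Mathlib

/-- A labeled transition system over a finite alphabet `A`:
finitely many states, an initial state, and labeled transitions. -/
structure LTS (A : Type) [Fintype A] where
  St : Type
  fin : Fintype St
  init : St
  tr : St → A → St → Prop

/-- A disjunctive modal transition system over a finite alphabet `A`. -/
structure DMTS (A : Type) [Fintype A] where
  St : Type
  fin : Fintype St
  init : Set St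
  may : St → A → St → Prop
  must : St → Set (A × St) → Prop
  consistent : ∀ s N, must s N → ∀ a t, (a, t) ∈ N → may s a t

variable {A : Type} [Fintype A]

/-- `R` is a modal refinement of `D₁` into `D₂`. -/
def IsModalRefinement (D₁ D₂ : DMTS A) (R : D₁.St → D₂.St → Prop) : Prop :=
  (∀ s₁ ∈ D₁.init, ∃ s₂ ∈ D₂.init, R s₁ s₂) ∧
  ∀ s₁ s₂, R s₁ s₂ →
    (∀ a t₁, D₁.may s₁ a t₁ → ∃ t₂, D₂.may s₂ a t₂ ∧ R t₁ t₂) ∧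
    (∀ N₂, D₂.must s₂ N₂ → ∃ N₁, D₁.must s₁ N₁ ∧
      ∀ a t₁, (a, t₁) ∈ N₁ → ∃ t₂, (a, t₂) ∈ N₂ ∧ R t₁ t₂)

/-- Modal refinement `D₁ ≤ D₂`. -/
def dmtsLe (D₁ D₂ : DMTS A) : Prop := ∃ R, IsModalRefinement D₁ D₂ R

/-- The standard embedding of LTS into DMTS. -/
def chi (I : LTS A) : DMTS A where
  St := I.St
  fin := I.fin
  init := {I.init}
  may := I.tr
  must := fun s N => ∃ a t, I.tr s a t ∧ N = {(a, t)}
  consistent := by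
    rintro s N ⟨a, t, htr, rfl⟩ a' t' ht'
    simp only [Set.mem_singleton_iff, Prod.mk.injEq] at ht'
    obtain ⟨rfl, rfl⟩ := ht'
    exact htr

/-- `R` is a bisimulation between the LTS `I₁` and `I₂`. -/
def IsBisimulation (I₁ I₂ : LTS A) (R : I₁.St → I₂.St → Prop) : Prop :=
  R I₁.init I₂.init ∧
  ∀ s₁ s₂, R s₁ s₂ →
    (∀ a t₁, I₁.tr s₁ a t₁ → ∃ t₂, I₂.tr s₂ a t₂ ∧ R t₁ t₂) ∧
    (∀ a t₂, I₂.tr s₂ a t₂ → ∃ t₁, I₁.tr s₁ a t₁ ∧ R t₁ t₂)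

/-- `I₁` and `I₂` are bisimilar. -/
def Bisimilar (I₁ I₂ : LTS A) : Prop := ∃ R, IsBisimulation I₁ I₂ R

/-- `R` is a simulation of LTS `I₁` into `I₂`. -/
def IsSimulation (I₁ I₂ : LTS A) (R : I₁.St → I₂.St → Prop) : Prop :=
  R I₁.init I₂.init ∧
  ∀ s₁ s₂, R s₁ s₂ → ∀ a t₁, I₁.tr s₁ a t₁ → ∃ t₂, I₂.tr s₂ a t₂ ∧ R t₁ t₂

/-- `(R₁, R₂)` is a simulation refinement of `D₁` into `D₂`. -/
def IsSimRefinement (D₁ D₂ : DMTS A) (R₁ R₂ : D₁.St → D₂.St → Prop) : Prop :=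
  (∀ s₁ ∈ D₁.init, ∃ s₂ ∈ D₂.init, R₁ s₁ s₂) ∧
  (∀ s₂ ∈ D₂.init, ∃ s₁ ∈ D₁.init, R₂ s₁ s₂) ∧
  (∀ s₁ s₂, R₁ s₁ s₂ → ∀ a t₁, D₁.may s₁ a t₁ → ∃ t₂, D₂.may s₂ a t₂ ∧ R₁ t₁ t₂) ∧
  (∀ s₁ s₂, R₂ s₁ s₂ → ∀ N₂, D₂.must s₂ N₂ → ∃ N₁, D₁.must s₁ N₁ ∧
    ∀ a t₁, (a, t₁) ∈ N₁ → ∃ t₂, (a, t₂) ∈ N₂ ∧ R₂ t₁ t₂)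

/-- Simulation refinement `D₁ ≲ D₂`. -/
def dmtsSimLe (D₁ D₂ : DMTS A) : Prop := ∃ R₁ R₂, IsSimRefinement D₁ D₂ R₁ R₂

/-- `(DMTS, χ, ≲)` is a behavioral specification theory for LTS adequate for
simulation equivalence: with `I ⊨ D ⟺ χ(I) ≲ D`, every `χ(I)` is a characteristic
formula, and `Th I₁ = Th I₂` iff `I₁` and `I₂` are simulation equivalent. -/
lemma dmtsSimLe_trans {D₁ D₂ D₃ : DMTS A} (h12 : dmtsSimLe D₁ D₂)
    (h23 : dmtsSimLe D₂ D₃) : dmtsSimLe D₁ D₃ := by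
  obtain ⟨R₁, R₂, hi1, hi2, hm1, hm2⟩ := h12
  obtain ⟨S₁, S₂, hj1, hj2, hn1, hn2⟩ := h23
  refine ⟨fun s₁ s₃ => ∃ s₂, R₁ s₁ s₂ ∧ S₁ s₂ s₃,
          fun s₁ s₃ => ∃ s₂, R₂ s₁ s₂ ∧ S₂ s₂ s₃, ?_, ?_, ?_, ?_⟩
  · intro s₁ hs₁
    obtain ⟨s₂, hs₂, hR⟩ := hi1 s₁ hs₁
    obtain ⟨s₃, hs₃, hS⟩ := hj1 s₂ hs₂
    exact ⟨s₃, hs₃, s₂, hR, hS⟩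
  · intro s₃ hs₃
    obtain ⟨s₂, hs₂, hS⟩ := hj2 s₃ hs₃
    obtain ⟨s₁, hs₁, hR⟩ := hi2 s₂ hs₂
    exact ⟨s₁, hs₁, s₂, hR, hS⟩
  · rintro s₁ s₃ ⟨s₂, hR, hS⟩ a t₁ ht₁
    obtain ⟨t₂, ht₂, hR'⟩ := hm1 s₁ s₂ hR a t₁ ht₁
    obtain ⟨t₃, ht₃, hS'⟩ := hn1 s₂ s₃ hS a t₂ ht₂
    exact ⟨t₃, ht₃, t₂, hR', hS'⟩
  · rintro s₁ s₃ ⟨s₂, hR, hS⟩ N₃ hN₃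
    obtain ⟨N₂, hN₂, hmap₂⟩ := hn2 s₂ s₃ hS N₃ hN₃
    obtain ⟨N₁, hN₁, hmap₁⟩ := hm2 s₁ s₂ hR N₂ hN₂
    refine ⟨N₁, hN₁, ?_⟩
    intro a t₁ ht₁
    obtain ⟨t₂, ht₂, hR'⟩ := hmap₁ a t₁ ht₁
    obtain ⟨t₃, ht₃, hS'⟩ := hmap₂ a t₂ ht₂
    exact ⟨t₃, ht₃, t₂, hR', hS'⟩

lemma chi_simLe_iff (I₁ I₂ : LTS A) :
    dmtsSimLe (chi I₁) (chi I₂) ↔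
      (∃ R, IsSimulation I₁ I₂ R) ∧ (∃ R, IsSimulation I₂ I₁ R) := by
  constructor
  · rintro ⟨R₁, R₂, hi1, hi2, hm1, hm2⟩
    constructor
    · obtain ⟨s₂, hs₂, hR⟩ := hi1 I₁.init rfl
      refine ⟨R₁, ?_, ?_⟩
      · cases hs₂; exact hR
      · intro s₁ s₂ h a t₁ ht₁
        exact hm1 s₁ s₂ h a t₁ ht₁
    · obtain ⟨s₁, hs₁, hR⟩ := hi2 I₂.init rfl
      refine ⟨fun s₂ s₁ => R₂ s₁ s₂, ?_, ?_⟩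
      · cases hs₁; exact hR
      · intro s₂ s₁ h a t₂ ht₂
        obtain ⟨N₁, ⟨a', t₁, htr₁, rfl⟩, hmap⟩ :=
          hm2 s₁ s₂ h {(a, t₂)} ⟨a, t₂, ht₂, rfl⟩
        obtain ⟨t₂', ht₂', hR'⟩ := hmap a' t₁ rfl
        replace ht₂' : a' = a ∧ t₂' = t₂ := Prod.mk.inj ht₂'
        obtain ⟨rfl, rfl⟩ := ht₂'
        exact ⟨t₁, htr₁, hR'⟩
  · rintro ⟨⟨S₁, hS₁i, hS₁⟩, ⟨S₂, hS₂i, hS₂⟩⟩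
    refine ⟨S₁, fun s₁ s₂ => S₂ s₂ s₁, ?_, ?_, ?_, ?_⟩
    · rintro s₁ rfl; exact ⟨I₂.init, rfl, hS₁i⟩
    · rintro s₂ rfl; exact ⟨I₁.init, rfl, hS₂i⟩
    · intro s₁ s₂ h a t₁ ht₁; exact hS₁ s₁ s₂ h a t₁ ht₁
    · rintro s₁ s₂ h N₂ ⟨a, t₂, htr₂, rfl⟩
      obtain ⟨t₁, htr₁, hR'⟩ := hS₂ s₂ s₁ h a t₂ htr₂
      refine ⟨{(a, t₁)}, ⟨a, t₁, htr₁, rfl⟩, ?_⟩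
      rintro a' t' ht'
      replace ht' : a' = a ∧ t' = t₁ := Prod.mk.inj ht'
      obtain ⟨rfl, rfl⟩ := ht'
      exact ⟨t₂, rfl, hR'⟩

lemma chi_simLe_refl (I : LTS A) : dmtsSimLe (chi I) (chi I) :=
  (chi_simLe_iff I I).mpr
    ⟨⟨Eq, rfl, by rintro s₁ _ rfl a t₁ ht₁; exact ⟨t₁, ht₁, rfl⟩⟩,
     ⟨Eq, rfl, by rintro s₁ _ rfl a t₁ ht₁; exact ⟨t₁, ht₁, rfl⟩⟩⟩

theorem dmts_sim_spec_theory_adequate_for_sim_equiv :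
    (∀ I : LTS A, dmtsSimLe (chi I) (chi I) ∧
      ∀ I' : LTS A, dmtsSimLe (chi I') (chi I) →
        {D : DMTS A | dmtsSimLe (chi I') D} = {D : DMTS A | dmtsSimLe (chi I) D}) ∧
    (∀ I₁ I₂ : LTS A,
      {D : DMTS A | dmtsSimLe (chi I₁) D} = {D : DMTS A | dmtsSimLe (chi I₂) D} ↔
        ((∃ R, IsSimulation I₁ I₂ R) ∧ (∃ R, IsSimulation I₂ I₁ R))) := by
  have key : ∀ I₁ I₂ : LTS A, dmtsSimLe (chi I₁) (chi I₂) →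
      {D : DMTS A | dmtsSimLe (chi I₁) D} = {D : DMTS A | dmtsSimLe (chi I₂) D} := by
    intro I₁ I₂ h
    have h' : dmtsSimLe (chi I₂) (chi I₁) := by
      rw [chi_simLe_iff] at h ⊢; exact ⟨h.2, h.1⟩
    ext D
    exact ⟨fun hD => dmtsSimLe_trans h' hD, fun hD => dmtsSimLe_trans h hD⟩
  constructor
  · intro I
    exact ⟨chi_simLe_refl I, fun I' h => key I' I h⟩
  · intro I₁ I₂
    constructor
    · intro h
      have : chi I₂ ∈ {D : DMTS A | dmtsSimLe (chi I₁) D} := by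
        rw [h]; exact chi_simLe_refl I₂
      exact (chi_simLe_iff I₁ I₂).mp this
    · intro h
      exact key I₁ I₂ ((chi_simLe_iff I₁ I₂).mpr h)
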